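/- For every integer n > 2, there exists a 2-AND-BN on n nodes (every node has indegree 2 and each update function is the conjunction of its two inputs, with no negations) for which the size of the minimum control node set is 2. -/
import Mathlib


namespace BN

variable {n : ℕ}

/-- The Boolean function `f` depends on input `j`. -/
def Depends (f : (Fin n → Bool) → Bool) (j : Fin n) : Prop :=
  ∃ x : Fin n → Bool, f (Function.update x j (!(x j))) ≠ f x

/-- The set of incoming nodes of node `i` (Γ⁻). -/
def inSet (F : Fin n → (Fin n → Bool) → Bool) (i : Fin n) : Set (Fin n) :=
  {j | Depends (F i) j}

/-- The set of outgoing nodes of node `i` (Γ⁺). -/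
def outSet (F : Fin n → (Fin n → Bool) → Bool) (i : Fin n) : Set (Fin n) :=
  {j | Depends (F j) i}

/-- The controlled trajectory: nodes in `U` get an xor-control signal. -/
def traj (F : Fin n → (Fin n → Bool) → Bool) (U : Finset (Fin n))
    (u : ℕ → Fin n → Bool) (x0 : Fin n → Bool) : ℕ → Fin n → Bool
  | 0 => x0
  | t + 1 => fun i =>
      if i ∈ U then Bool.xor (u t i) (F i (traj F U u x0 t))
      else F i (traj F U u x0 t)

/-- `U` is a control node set: any initial state can be driven to any target state. -/
def IsControlSet (F : Fin n → (Fin n → Bool) → Bool) (U : Finset (Fin n)) : Prop :=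
  ∀ x0 xT : Fin n → Bool, ∃ t : ℕ, 1 ≤ t ∧ ∃ u : ℕ → Fin n → Bool, traj F U u x0 t = xT

/-- AND of the inputs in `S` (no negations). -/
def andFun (S : Finset (Fin n)) (x : Fin n → Bool) : Bool :=
  decide (∀ j ∈ S, x j = true)

/-- `f` is the conjunction of `k` distinct inputs (no negations). -/
def IsSimpleKAnd (k : ℕ) (f : (Fin n → Bool) → Bool) : Prop :=
  ∃ S : Finset (Fin n), S.card = k ∧ f = andFun S

/-- A simple `k`-`k`-AND-BN: each function is a `k`-input AND (no negations) and
every node has indegree `k` and outdegree `k`. -/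
def IsSimpleKKAndBN (k : ℕ) (F : Fin n → (Fin n → Bool) → Bool) : Prop :=
  (∀ i, IsSimpleKAnd k (F i)) ∧ ∀ i, (inSet F i).ncard = k ∧ (outSet F i).ncard = k


/-! ### Auxiliary construction for `stmt10`.

The network: node `0` has inputs `{n-1, 1}`, node `1` has inputs `{0, n-1}`, and
node `i` for `i ≥ 2` has inputs `{i-1, 0}`.  Every update function is the AND of
its two inputs. -/

lemma andFun_pair {n : ℕ} (a b : Fin n) (x : Fin n → Bool) :
    andFun {a, b} x = (x a && x b) := by
  simp [andFun]

lemma bxor_cancel (a b : Bool) : Bool.xor (Bool.xor a b) b = a := by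
  cases a <;> cases b <;> rfl

def Snodes (n : ℕ) (hn : 2 < n) (i : Fin n) : Finset (Fin n) :=
  if i.val = 0 then {⟨n - 1, by omega⟩, ⟨1, by omega⟩}
  else if i.val = 1 then {⟨0, by omega⟩, ⟨n - 1, by omega⟩}
  else {⟨i.val - 1, by have := i.isLt; omega⟩, ⟨0, by omega⟩}

def Fnet (n : ℕ) (hn : 2 < n) (i : Fin n) : (Fin n → Bool) → Bool :=
  andFun (Snodes n hn i)

/-- The intended controlled trajectory with control nodes `{0, 1}` and
prescribed values `d` on the controlled nodes. -/
def Xseq (n : ℕ) (hn : 2 < n) (d : ℕ → Fin n → Bool) (x0 : Fin n → Bool) :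
    ℕ → Fin n → Bool
  | 0 => x0
  | s + 1 => fun i =>
      if i.val ≤ 1 then d (s + 1) i else Fnet n hn i (Xseq n hn d x0 s)

lemma memU_iff {n : ℕ} (hn : 2 < n) (i : Fin n) :
    i ∈ ({⟨0, by omega⟩, ⟨1, by omega⟩} : Finset (Fin n)) ↔ i.val ≤ 1 := by
  simp only [Finset.mem_insert, Finset.mem_singleton, Fin.ext_iff]
  omega

lemma upper_bound (n : ℕ) (hn : 2 < n) :
    IsControlSet (Fnet n hn) {⟨0, by omega⟩, ⟨1, by omega⟩} := by
  intro x0 xT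
  set d : ℕ → Fin n → Bool := fun s i =>
    if i.val = 0 then (if s = n then xT ⟨0, by omega⟩ else true)
    else if s = n then xT ⟨1, by omega⟩
    else if h : 2 ≤ s then xT ⟨n + 1 - s, by omega⟩ else true with hd
  refine ⟨n, by omega,
    fun s i => Bool.xor (d (s + 1) i) (Fnet n hn i (Xseq n hn d x0 s)), ?_⟩
  have htraj : ∀ s, traj (Fnet n hn) {⟨0, by omega⟩, ⟨1, by omega⟩}
      (fun s i => Bool.xor (d (s + 1) i) (Fnet n hn i (Xseq n hn d x0 s))) x0 s
      = Xseq n hn d x0 s := by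
    intro s
    induction s with
    | zero => rfl
    | succ s ih =>
      funext i
      simp only [traj, ih]
      by_cases hi : i.val ≤ 1
      · rw [if_pos ((memU_iff hn i).mpr hi), bxor_cancel]
        show _ = Xseq n hn d x0 (s + 1) i
        simp [Xseq, hi]
      · rw [if_neg (fun h => hi ((memU_iff hn i).mp h))]
        show _ = Xseq n hn d x0 (s + 1) i
        simp [Xseq, hi]
  rw [htraj]
  -- remains: Xseq n hn d x0 n = xT
  have hd0 : ∀ s, 1 ≤ s → Xseq n hn d x0 s ⟨0, by omega⟩ = d s ⟨0, by omega⟩ := by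
    intro s hs
    obtain ⟨r, rfl⟩ : ∃ r, s = r + 1 := ⟨s - 1, by omega⟩
    simp [Xseq]
  have hd1 : ∀ s, 1 ≤ s → Xseq n hn d x0 s ⟨1, by omega⟩ = d s ⟨1, by omega⟩ := by
    intro s hs
    obtain ⟨r, rfl⟩ : ∃ r, s = r + 1 := ⟨s - 1, by omega⟩
    simp [Xseq]
  have hzero_true : ∀ s, 1 ≤ s → s < n → Xseq n hn d x0 s ⟨0, by omega⟩ = true := by
    intro s hs hsn
    rw [hd0 s hs]
    simp [hd, Nat.ne_of_lt hsn]
  have hstep : ∀ s, 1 ≤ s → s < n → ∀ i : Fin n, 2 ≤ i.val →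
      Xseq n hn d x0 (s + 1) i
        = Xseq n hn d x0 s ⟨i.val - 1, by have := i.isLt; omega⟩ := by
    intro s hs hsn i hi
    have h2 : Xseq n hn d x0 (s + 1) i = Fnet n hn i (Xseq n hn d x0 s) := by
      simp [Xseq, show ¬ i.val ≤ 1 by omega]
    rw [h2]
    have hS : Snodes n hn i
        = {⟨i.val - 1, by have := i.isLt; omega⟩, ⟨0, by omega⟩} := by
      simp [Snodes, show ¬ i.val = 0 by omega, show ¬ i.val = 1 by omega]
    rw [Fnet, hS, andFun_pair, hzero_true s hs hsn]
    simp
  have hchain : ∀ j : ℕ, ∀ s : ℕ, 1 ≤ s → s + 1 + j ≤ n → ∀ i : Fin n,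
      i.val = 2 + j →
      Xseq n hn d x0 (s + 1 + j) i = Xseq n hn d x0 s ⟨1, by omega⟩ := by
    intro j
    induction j with
    | zero =>
      intro s hs hle i hi
      have h := hstep s hs (by omega) i (by omega)
      have he : (⟨i.val - 1, by have := i.isLt; omega⟩ : Fin n) = ⟨1, by omega⟩ :=
        Fin.ext (by simp [hi])
      rw [show s + 1 + 0 = s + 1 from rfl, h, he]
    | succ j ih =>
      intro s hs hle i hi
      have h2 := hstep (s + 1 + j) (by omega) (by omega) i (by omega)
      have h3 := ih s hs (by omega) ⟨i.val - 1, by have := i.isLt; omega⟩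
        (by simp [hi])
      rw [show s + 1 + (j + 1) = (s + 1 + j) + 1 from rfl, h2, h3]
  funext i
  rcases Nat.lt_or_ge i.val 2 with h2 | h2
  · by_cases h0 : i.val = 0
    · have he : i = ⟨0, by omega⟩ := Fin.ext h0
      rw [he, hd0 n (by omega)]
      simp [hd]
    · have h1 : i.val = 1 := by omega
      have he : i = ⟨1, by omega⟩ := Fin.ext h1
      rw [he, hd1 n (by omega)]
      simp [hd]
  · have hlt := i.isLt
    have h := hchain (i.val - 2) (n + 1 - i.val) (by omega) (by omega) i (by omega)
    rw [show (n + 1 - i.val) + 1 + (i.val - 2) = n by omega] at h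
    rw [h, hd1 _ (by omega)]
    have hne : ¬ (n + 1 - i.val) = n := by omega
    have hge : 2 ≤ n + 1 - i.val := by omega
    simp only [hd]
    rw [if_neg (by simp), if_neg hne, dif_pos hge]
    congr 1
    exact Fin.ext (by simp; omega)

lemma lower_bound (n : ℕ) (hn : 2 < n) (U : Finset (Fin n))
    (hU : IsControlSet (Fnet n hn) U) : 2 ≤ U.card := by
  by_contra hcard
  have hone : ∀ a ∈ U, ∀ b ∈ U, a = b := Finset.card_le_one.mp (by omega)
  obtain ⟨Z, i, hiZ, hZU, hZcl⟩ :
      ∃ (Z : Finset (Fin n)) (i : Fin n), i ∈ Z ∧ (∀ i ∈ Z, i ∉ U) ∧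
        (∀ i ∈ Z, ∃ j ∈ Snodes n hn i, j ∈ Z) := by
    by_cases h0 : (⟨0, by omega⟩ : Fin n) ∈ U
    · refine ⟨Finset.univ.filter (fun i => 1 ≤ i.val), ⟨1, by omega⟩,
        by simp, ?_, ?_⟩
      · intro i hi hiU
        have he := hone i hiU _ h0
        simp only [Finset.mem_filter] at hi
        rw [he] at hi
        simp at hi
      · intro i hi
        simp only [Finset.mem_filter, Finset.mem_univ, true_and] at hi
        by_cases h1 : i.val = 1
        · refine ⟨⟨n - 1, by omega⟩, ?_, ?_⟩
          · simp [Snodes, h1, show ¬ i.val = 0 by omega]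
          · simp only [Finset.mem_filter, Finset.mem_univ, true_and]
            omega
        · refine ⟨⟨i.val - 1, by have := i.isLt; omega⟩, ?_, ?_⟩
          · simp [Snodes, show ¬ i.val = 0 by omega, h1]
          · simp only [Finset.mem_filter, Finset.mem_univ, true_and]
            omega
    · by_cases h1 : (⟨1, by omega⟩ : Fin n) ∈ U
      · refine ⟨{⟨0, by omega⟩, ⟨n - 1, by omega⟩}, ⟨0, by omega⟩, by simp, ?_, ?_⟩
        · intro i hi hiU
          have he := hone i hiU _ h1
          rw [he] at hi
          simp only [Finset.mem_insert, Finset.mem_singleton, Fin.ext_iff] at hi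
          omega
        · intro i hi
          simp only [Finset.mem_insert, Finset.mem_singleton, Fin.ext_iff] at hi
          rcases hi with h | h
          · refine ⟨⟨n - 1, by omega⟩, ?_, ?_⟩
            · simp [Snodes, h]
            · exact Finset.mem_insert_of_mem (Finset.mem_singleton_self _)
          · refine ⟨⟨0, by omega⟩, ?_, ?_⟩
            · simp [Snodes, show ¬ i.val = 0 by omega, show ¬ i.val = 1 by omega]
            · simp
      · refine ⟨{⟨0, by omega⟩, ⟨1, by omega⟩}, ⟨0, by omega⟩, by simp, ?_, ?_⟩
        · intro i hi hiU
          simp only [Finset.mem_insert, Finset.mem_singleton] at hi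
          rcases hi with rfl | rfl
          · exact h0 hiU
          · exact h1 hiU
        · intro i hi
          simp only [Finset.mem_insert, Finset.mem_singleton, Fin.ext_iff] at hi
          rcases hi with h | h
          · refine ⟨⟨1, by omega⟩, ?_, by simp⟩
            simp [Snodes, h]
          · refine ⟨⟨0, by omega⟩, ?_, by simp⟩
            simp [Snodes, show ¬ i.val = 0 by omega, h]
  obtain ⟨t, ht, u, htraj⟩ := hU (fun _ => false) (fun _ => true)
  have hinv : ∀ s, ∀ i ∈ Z, traj (Fnet n hn) U u (fun _ => false) s i = false := by
    intro s
    induction s with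
    | zero => intro i _; rfl
    | succ s ih =>
      intro i hi
      obtain ⟨j, hjS, hjZ⟩ := hZcl i hi
      have hj := ih j hjZ
      simp only [traj, if_neg (hZU i hi)]
      show andFun (Snodes n hn i) _ = false
      exact decide_eq_false (fun hall => by
        have := hall j hjS
        rw [hj] at this
        exact Bool.false_ne_true this)
  have hfin := congrFun htraj i
  rw [hinv t i hiZ] at hfin
  exact Bool.false_ne_true hfin

/-- For every `n > 2`, there exists a 2-AND-BN on `n` nodes (each update
function the AND of two distinct inputs, no negations; outdegree unconstrained) whose
minimum control node set has size 2. -/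
theorem stmt10 (n : ℕ) (hn : 2 < n) :
    ∃ F : Fin n → (Fin n → Bool) → Bool, (∀ i, IsSimpleKAnd 2 (F i)) ∧
      (∃ U : Finset (Fin n), IsControlSet F U ∧ U.card = 2) ∧
      ∀ U : Finset (Fin n), IsControlSet F U → 2 ≤ U.card := by
  refine ⟨Fnet n hn, ?_, ?_, fun U hU => lower_bound n hn U hU⟩
  · intro i
    refine ⟨Snodes n hn i, ?_, rfl⟩
    unfold Snodes
    split_ifs with h0 h1
    · exact Finset.card_pair (by simp [Fin.ext_iff]; omega)
    · exact Finset.card_pair (by simp [Fin.ext_iff]; omega)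
    · exact Finset.card_pair (by simp [Fin.ext_iff]; omega)
  · refine ⟨{⟨0, by omega⟩, ⟨1, by omega⟩}, upper_bound n hn, ?_⟩
    rw [Finset.card_pair (by simp [Fin.ext_iff])]


end BN
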